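/- Let α, β ∈ ℂ and let τ : ℤ → ℂ be a Somos 4 sequence with coefficients α, β such that τ_n ≠ 0 for all n ∈ ℤ. Let J be the (constant) value of J_n = f_{n-1} f_n + α (1/f_{n-1} + 1/f_n) + β/(f_{n-1} f_n), where f_n = τ_{n+1} τ_{n-1} / (τ_n)^2. Then τ is also a Somos 5 sequence with coefficients α' = −β and β' = α² + βJ, i.e. τ_{n+3} τ_{n-2} = −β τ_{n+2} τ_{n-1} + (α² + βJ) τ_{n+1} τ_n for all n ∈ ℤ. -/

import Mathlib

/-- Every nonvanishing Somos 4 sequence with coefficients `α, β` is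
also a Somos 5 sequence, with coefficients `α' = -β` and `β' = α^2 + β*J`,
where `J` is the conserved quantity of the associated second order map. -/
theorem somos4_is_somos5 (α β : ℂ) (τ : ℤ → ℂ)
    (hτ : ∀ n : ℤ, τ (n + 2) * τ (n - 2) = α * (τ (n + 1) * τ (n - 1)) + β * (τ n) ^ 2)
    (hne : ∀ n : ℤ, τ n ≠ 0)
    (f : ℤ → ℂ) (hf : ∀ n : ℤ, f n = τ (n + 1) * τ (n - 1) / (τ n) ^ 2)
    (J : ℂ)
    (hJ : ∀ n : ℤ, f (n - 1) * f n + α * (1 / f (n - 1) + 1 / f n)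
      + β / (f (n - 1) * f n) = J) :
    ∀ n : ℤ, τ (n + 3) * τ (n - 2)
      = (-β) * (τ (n + 2) * τ (n - 1)) + (α ^ 2 + β * J) * (τ (n + 1) * τ n) := by
  intro n
  have hb := hne (n - 1)
  have hc := hne n
  have hd := hne (n + 1)
  have he := hne (n + 2)
  have e2 : n + 1 - 1 = n := by ring
  have e3 : n + 1 + 1 = n + 2 := by ring
  have h1 := hτ n
  have h2 := hτ (n + 1)
  rw [show n + 1 + 2 = n + 3 from by ring, show n + 1 - 2 = n - 1 from by ring,
    e2, e3] at h2
  have hJ1 := hJ (n + 1)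
  rw [e2, hf n, hf (n + 1), e2, e3] at hJ1
  have hJ2 : τ (n - 1) ^ 2 * τ (n + 2) ^ 2
      + α * (τ n ^ 3 * τ (n + 2) + τ (n + 1) ^ 3 * τ (n - 1))
      + β * (τ n ^ 2 * τ (n + 1) ^ 2)
      = J * (τ n * τ (n + 1) * τ (n - 1) * τ (n + 2)) := by
    field_simp at hJ1
    have hM : τ n ^ 3 * τ (n + 1) ^ 3 * τ (n - 1) * τ (n + 2) ≠ 0 := by
      simp [hb, hc, hd, he]
    refine mul_right_cancel₀ hM ?_
    linear_combination (τ n ^ 3 * τ (n + 1) ^ 3 * τ (n - 1) * τ (n + 2)) * hJ1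
  have key : (τ (n + 3) * τ (n - 2)) * (τ (n - 1) * τ (n + 2))
      = ((-β) * (τ (n + 2) * τ (n - 1)) + (α ^ 2 + β * J) * (τ (n + 1) * τ n))
        * (τ (n - 1) * τ (n + 2)) := by
    linear_combination (τ (n + 2) * τ (n - 2)) * h2
      + (α * τ (n + 2) * τ n + β * τ (n + 1) ^ 2) * h1 + β * hJ2
  exact mul_right_cancel₀ (mul_ne_zero hb he) key
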